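/- (Key bound in the proof of Theorem 6) Let Ω be an LT output degree distribution with average degree Ω̄ = Σ_{j=1}^{d_max} j·Ω_j. Then for every λ ∈ [0,1), 1 − ρ_λ ≥ (1 − λ)^{Ω̄}. -/

import Mathlib

open Finset

/-- `ρ_λ = (1/2)·Σ_{j=1}^{dmax} Ω_j·(1 − (1 − 2λ)^j)`. -/
noncomputable def rho (dmax : ℕ) (Ω : ℕ → ℝ) (lam : ℝ) : ℝ :=
  (1 / 2) * ∑ j ∈ Finset.Icc 1 dmax, Ω j * (1 - (1 - 2 * lam) ^ j)

/-- For `a > 0`, `t ↦ a ^ t` is convex. -/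
lemma convexOn_const_rpow {a : ℝ} (ha : 0 < a) :
    ConvexOn ℝ Set.univ (fun t : ℝ => a ^ t) := by
  have h : ConvexOn ℝ Set.univ (fun t : ℝ => Real.exp (Real.log a * t)) := by
    have := convexOn_exp.comp_affineMap (LinearMap.toAffineMap
      (Real.log a • (LinearMap.id : ℝ →ₗ[ℝ] ℝ)))
    simpa [Function.comp_def, Pi.smul_apply, id_eq, smul_eq_mul] using this
  convert h using 2 with t
  rw [Real.rpow_def_of_pos ha, mul_comm]

/-- Pointwise bound: for `x ∈ [-1,1]` and `j ≥ 1`, `((1+x)/2)^j ≤ (1+x^j)/2`. -/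
lemma pointwise_bound {x : ℝ} (hx1 : -1 ≤ x) (hx2 : x ≤ 1) {j : ℕ} (hj : 1 ≤ j) :
    ((1 + x) / 2) ^ j ≤ (1 + x ^ j) / 2 := by
  rcases le_or_gt 0 x with hx | hx
  · have hc := (convexOn_pow j).2 (Set.mem_Ici.2 hx) (Set.mem_Ici.2 (zero_le_one))
      (by norm_num : (0:ℝ) ≤ 1/2) (by norm_num : (0:ℝ) ≤ 1/2) (by norm_num)
    simp only [smul_eq_mul, one_pow] at hc
    calc ((1 + x) / 2) ^ j = (1/2 * x + 1/2 * 1) ^ j := by ring_nf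
      _ ≤ 1/2 * x ^ j + 1/2 * 1 := hc
      _ = (1 + x ^ j) / 2 := by ring
  · have hb0 : (0:ℝ) ≤ (1 + x) / 2 := by linarith
    have hb1 : (1 + x) / 2 ≤ 1 := by linarith
    have h1 : ((1 + x) / 2) ^ j ≤ (1 + x) / 2 := pow_le_of_le_one hb0 hb1 (by omega)
    have h2 : x ≤ x ^ j := by
      have habs : |x| ^ j ≤ |x| := pow_le_of_le_one (abs_nonneg x) (abs_le.2 ⟨hx1, hx2⟩) (by omega)
      have : -(|x| ^ j) ≤ x ^ j := by
        rw [← abs_pow] at *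
        exact neg_abs_le _
      have hxa : x = -|x| := by rw [abs_of_neg hx]; ring
      nlinarith [abs_pow x j]
    linarith

/-- Key bound in the proof of Theorem 6: for every `λ ∈ [0,1)`,
`1 − ρ_λ ≥ (1 − λ)^{Ω̄}`, where `Ω̄ = Σ_{j=1}^{dmax} j·Ω_j` is the average degree
(real exponent). -/
theorem stmt_13 (dmax : ℕ) (Ω : ℕ → ℝ)
    (hΩpos : ∀ j ∈ Finset.Icc 1 dmax, 0 ≤ Ω j)
    (hΩsum : ∑ j ∈ Finset.Icc 1 dmax, Ω j = 1)
    (lam : ℝ) (hlam : lam ∈ Set.Ico (0 : ℝ) 1) :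
    (1 - lam) ^ (∑ j ∈ Finset.Icc 1 dmax, (j : ℝ) * Ω j) ≤ 1 - rho dmax Ω lam := by
  obtain ⟨hl0, hl1⟩ := hlam
  have ha : (0:ℝ) < 1 - lam := by linarith
  set x : ℝ := 1 - 2 * lam with hxdef
  have hx1 : -1 ≤ x := by simp [hxdef]; linarith
  have hx2 : x ≤ 1 := by simp [hxdef]; linarith
  -- Step 1: Jensen
  have jensen : (1 - lam) ^ (∑ j ∈ Finset.Icc 1 dmax, (j : ℝ) * Ω j)
      ≤ ∑ j ∈ Finset.Icc 1 dmax, Ω j * (1 - lam) ^ (j : ℕ) := by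
    have hc := (convexOn_const_rpow ha).map_sum_le (t := Finset.Icc 1 dmax)
      (w := Ω) (p := fun j => (j : ℝ)) hΩpos hΩsum (fun i _ => Set.mem_univ _)
    simp only [smul_eq_mul] at hc
    calc (1 - lam) ^ (∑ j ∈ Finset.Icc 1 dmax, (j : ℝ) * Ω j)
        = (1 - lam) ^ (∑ j ∈ Finset.Icc 1 dmax, Ω j * (j : ℝ)) := by
          congr 1; exact Finset.sum_congr rfl (fun j _ => mul_comm _ _)
      _ ≤ ∑ j ∈ Finset.Icc 1 dmax, Ω j * (1 - lam) ^ ((j : ℝ)) := hc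
      _ = ∑ j ∈ Finset.Icc 1 dmax, Ω j * (1 - lam) ^ (j : ℕ) := by
          refine Finset.sum_congr rfl (fun j _ => ?_)
          rw [Real.rpow_natCast]
  -- Step 2: pointwise
  have point : ∑ j ∈ Finset.Icc 1 dmax, Ω j * (1 - lam) ^ (j : ℕ)
      ≤ ∑ j ∈ Finset.Icc 1 dmax, Ω j * ((1 + x ^ j) / 2) := by
    refine Finset.sum_le_sum (fun j hj => ?_)
    have hj1 : 1 ≤ j := (Finset.mem_Icc.1 hj).1
    have := pointwise_bound hx1 hx2 hj1
    have heq : (1 + x) / 2 = 1 - lam := by rw [hxdef]; ring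
    rw [heq] at this
    exact mul_le_mul_of_nonneg_left this (hΩpos j hj)
  -- Step 3: rewrite 1 - rho
  have hrho : 1 - rho dmax Ω lam = ∑ j ∈ Finset.Icc 1 dmax, Ω j * ((1 + x ^ j) / 2) := by
    have h1 : ∑ j ∈ Finset.Icc 1 dmax, Ω j * ((1 + x ^ j) / 2)
        = (∑ j ∈ Finset.Icc 1 dmax, Ω j) / 2 + (∑ j ∈ Finset.Icc 1 dmax, Ω j * x ^ j) / 2 := by
      rw [Finset.sum_div, Finset.sum_div, ← Finset.sum_add_distrib]
      exact Finset.sum_congr rfl (fun j _ => by ring)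
    have h2 : ∑ j ∈ Finset.Icc 1 dmax, Ω j * (1 - x ^ j)
        = (∑ j ∈ Finset.Icc 1 dmax, Ω j) - ∑ j ∈ Finset.Icc 1 dmax, Ω j * x ^ j := by
      rw [← Finset.sum_sub_distrib]
      exact Finset.sum_congr rfl (fun j _ => by ring)
    rw [rho, ← hxdef, h2, h1, hΩsum]
    ring
  rw [hrho]
  exact le_trans jensen point
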